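/- Let X be a finite index set (the set C of tree-indices), and let A1, AK, B1, BK be finite sets of vertices, and suppose each vertex v in a set F meets (is adjacent to a vertex of) at least one of the structures H_i (i ∈ X), and for each v the number of i ∈ X such that v meets H_i internally is less than 1/8 of the number of i ∈ X such that v meets H_i. Then there exists a linear order of X such that in each of the four sets A1 ∩ F, AK ∩ F, B1 ∩ F, BK ∩ F, at least half the vertices v are 'happy', i.e., v meets H_i properly where i is the first element of X (in the order) such that v meets H_i. -/

import Mathlib

open scoped Classical

section Aux

variable {n : ℕ}

private def isFirst (meets : ℕ → Fin n → Prop) (σ : Equiv.Perm (Fin n)) (v : ℕ)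
    (i : Fin n) : Prop :=
  meets v i ∧ ∀ i', meets v i' → σ i ≤ σ i'

private lemma isFirst_unique {meets : ℕ → Fin n → Prop} {σ : Equiv.Perm (Fin n)} {v : ℕ}
    {i j : Fin n} (hi : isFirst meets σ v i) (hj : isFirst meets σ v j) : i = j :=
  σ.injective (le_antisymm (hi.2 _ hj.1) (hj.2 _ hi.1))

private lemma isFirst_swap {meets : ℕ → Fin n → Prop} {σ : Equiv.Perm (Fin n)} {v : ℕ}
    {i : Fin n} (j : Fin n) (hi : isFirst meets σ v i) (hj : meets v j) :
    isFirst meets (Equiv.swap (σ i) (σ j) * σ) v j := by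
  refine ⟨hj, fun i' hi' => ?_⟩
  have h1 : (Equiv.swap (σ i) (σ j) * σ) j = σ i := by
    simp [Equiv.swap_apply_right]
  rw [h1]
  show σ i ≤ Equiv.swap (σ i) (σ j) (σ i')
  rcases eq_or_ne (σ i') (σ i) with h | h
  · rw [h, Equiv.swap_apply_left]; exact hi.2 _ hj
  rcases eq_or_ne (σ i') (σ j) with h' | h'
  · rw [h', Equiv.swap_apply_right]
  · rw [Equiv.swap_apply_of_ne_of_ne h h']; exact hi.2 _ hi'

private lemma swap_swap_cancel {σ : Equiv.Perm (Fin n)} {i j : Fin n} :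
    Equiv.swap ((Equiv.swap (σ i) (σ j) * σ) j) ((Equiv.swap (σ i) (σ j) * σ) i)
      * (Equiv.swap (σ i) (σ j) * σ) = σ := by
  have h1 : (Equiv.swap (σ i) (σ j) * σ) j = σ i := by simp [Equiv.swap_apply_right]
  have h2 : (Equiv.swap (σ i) (σ j) * σ) i = σ j := by simp [Equiv.swap_apply_left]
  rw [h1, h2, ← mul_assoc, Equiv.swap_mul_self, one_mul]

private lemma fib_card {meets : ℕ → Fin n → Prop} {v : ℕ} {i j : Fin n}
    (hi : meets v i) (hj : meets v j) :
    (Finset.univ.filter fun σ : Equiv.Perm (Fin n) => isFirst meets σ v i).card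
      = (Finset.univ.filter fun σ : Equiv.Perm (Fin n) => isFirst meets σ v j).card := by
  apply Finset.card_nbij' (fun σ => Equiv.swap (σ i) (σ j) * σ)
    (fun σ => Equiv.swap (σ j) (σ i) * σ)
  · intro σ hσ
    rw [Finset.mem_coe, Finset.mem_filter] at hσ ⊢
    exact ⟨Finset.mem_univ _, isFirst_swap j hσ.2 hj⟩
  · intro σ hσ
    rw [Finset.mem_coe, Finset.mem_filter] at hσ ⊢
    exact ⟨Finset.mem_univ _, isFirst_swap i hσ.2 hi⟩
  · intro σ _
    exact swap_swap_cancel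
  · intro σ _
    exact swap_swap_cancel

/-- Per-vertex counting: fewer than 1/8 of all permutations make `v` unhappy. -/
private lemma bad_count {meets internal : ℕ → Fin n → Prop}
    (hmi : ∀ v i, internal v i → meets v i) {v : ℕ}
    (hne : ∃ i, meets v i)
    (h8 : 8 * (Finset.univ.filter fun i => internal v i).card
        < (Finset.univ.filter fun i => meets v i).card) :
    8 * (Finset.univ.filter fun σ : Equiv.Perm (Fin n) =>
        ¬ ∃ i, meets v i ∧ ¬ internal v i ∧ ∀ i', meets v i' → σ i ≤ σ i').card
      < (Finset.univ : Finset (Equiv.Perm (Fin n))).card := by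
  obtain ⟨i0, hi0⟩ := hne
  set c : ℕ := (Finset.univ.filter fun σ : Equiv.Perm (Fin n) => isFirst meets σ v i0).card
    with hc
  have hfib : ∀ i, meets v i →
      (Finset.univ.filter fun σ : Equiv.Perm (Fin n) => isFirst meets σ v i).card = c :=
    fun i h => fib_card h hi0
  have hex : ∀ σ : Equiv.Perm (Fin n), ∃ i, isFirst meets σ v i := by
    intro σ
    obtain ⟨i, hiM, hmin⟩ := Finset.exists_min_image (Finset.univ.filter fun i => meets v i)
      (fun i => σ i) ⟨i0, Finset.mem_filter.mpr ⟨Finset.mem_univ _, hi0⟩⟩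
    exact ⟨i, (Finset.mem_filter.mp hiM).2,
      fun i' h' => hmin i' (Finset.mem_filter.mpr ⟨Finset.mem_univ _, h'⟩)⟩
  have hdisj : ∀ s : Finset (Fin n), ((s.biUnion fun i =>
      Finset.univ.filter fun σ : Equiv.Perm (Fin n) => isFirst meets σ v i).card
      = ∑ i ∈ s, (Finset.univ.filter
          fun σ : Equiv.Perm (Fin n) => isFirst meets σ v i).card) := by
    intro s
    apply Finset.card_biUnion
    intro i _ j _ hij
    refine Finset.disjoint_left.mpr fun σ hσi hσj => hij ?_
    exact isFirst_unique (Finset.mem_filter.mp hσi).2 (Finset.mem_filter.mp hσj).2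
  have htot : (Finset.univ : Finset (Equiv.Perm (Fin n))).card
      = (Finset.univ.filter fun i => meets v i).card * c := by
    have heq : (Finset.univ : Finset (Equiv.Perm (Fin n)))
        = (Finset.univ.filter fun i => meets v i).biUnion fun i =>
            Finset.univ.filter fun σ : Equiv.Perm (Fin n) => isFirst meets σ v i := by
      ext σ
      simp only [Finset.mem_univ, true_iff]
      rw [Finset.mem_biUnion]
      obtain ⟨i, hi⟩ := hex σ
      exact ⟨i, Finset.mem_filter.mpr ⟨Finset.mem_univ _, hi.1⟩,
        Finset.mem_filter.mpr ⟨Finset.mem_univ _, hi⟩⟩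
    rw [heq, hdisj, Finset.sum_congr rfl fun i hi => hfib i (Finset.mem_filter.mp hi).2,
      Finset.sum_const, smul_eq_mul]
  have hbad : (Finset.univ.filter fun σ : Equiv.Perm (Fin n) =>
      ¬ ∃ i, meets v i ∧ ¬ internal v i ∧ ∀ i', meets v i' → σ i ≤ σ i').card
      = (Finset.univ.filter fun i => internal v i).card * c := by
    have heq : (Finset.univ.filter fun σ : Equiv.Perm (Fin n) =>
        ¬ ∃ i, meets v i ∧ ¬ internal v i ∧ ∀ i', meets v i' → σ i ≤ σ i')
        = (Finset.univ.filter fun i => internal v i).biUnion fun i =>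
            Finset.univ.filter fun σ : Equiv.Perm (Fin n) => isFirst meets σ v i := by
      ext σ
      rw [Finset.mem_filter, Finset.mem_biUnion]
      constructor
      · rintro ⟨-, hnh⟩
        obtain ⟨i, hi⟩ := hex σ
        have hint : internal v i := by
          by_contra hint
          exact hnh ⟨i, hi.1, hint, hi.2⟩
        exact ⟨i, Finset.mem_filter.mpr ⟨Finset.mem_univ _, hint⟩,
          Finset.mem_filter.mpr ⟨Finset.mem_univ _, hi⟩⟩
      · rintro ⟨i, hiK, hiF⟩
        refine ⟨Finset.mem_univ _, ?_⟩
        rintro ⟨j, hjm, hjint, hjmin⟩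
        have hij : i = j := isFirst_unique (Finset.mem_filter.mp hiF).2 ⟨hjm, hjmin⟩
        exact hjint (hij ▸ (Finset.mem_filter.mp hiK).2)
    rw [heq, hdisj, Finset.sum_congr rfl fun i hi =>
        hfib i (hmi v i (Finset.mem_filter.mp hi).2),
      Finset.sum_const, smul_eq_mul]
  rw [htot, hbad]
  have hcpos : 0 < c := by
    rcases Nat.eq_zero_or_pos c with h | h
    · exfalso
      have h0 : (Finset.univ : Finset (Equiv.Perm (Fin n))).card ≠ 0 :=
        Finset.card_ne_zero_of_mem (Finset.mem_univ 1)
      rw [htot, h, mul_zero] at h0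
      exact h0 rfl
    · exact h
  calc 8 * ((Finset.univ.filter fun i => internal v i).card * c)
      = (8 * (Finset.univ.filter fun i => internal v i).card) * c := by ring
    _ < (Finset.univ.filter fun i => meets v i).card * c :=
        (Nat.mul_lt_mul_right hcpos).mpr h8

end Aux

/-- Step (5) of the proof of Theorem 3.1: if every vertex `v` of `F` meets some
structure `H_i` (`i : Fin n`), and for each `v` fewer than `1/8` of the indices it
meets are met internally, then there is a linear order (a permutation `σ` of
`Fin n`) such that in each of the four sets `A1 ∩ F, AK ∩ F, B1 ∩ F, BK ∩ F`,
at least half the vertices are happy: they meet properly (meet but not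
internally) the first structure, in the order, that they meet. -/
theorem stmt15 (n : ℕ) (A1 AK B1 BK F : Finset ℕ)
    (meets internal : ℕ → Fin n → Prop)
    (hmi : ∀ v i, internal v i → meets v i)
    (hmeet : ∀ v ∈ F, ∃ i, meets v i)
    (hfrac : ∀ v ∈ F,
      8 * (Finset.univ.filter fun i => internal v i).card <
        (Finset.univ.filter fun i => meets v i).card) :
    ∃ σ : Equiv.Perm (Fin n),
      ∀ S ∈ [A1 ∩ F, AK ∩ F, B1 ∩ F, BK ∩ F],
        S.card ≤ 2 * (S.filter fun v => ∃ i, meets v i ∧ ¬ internal v i ∧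
          ∀ i', meets v i' → σ i ≤ σ i').card := by
  set Ω : Finset (Equiv.Perm (Fin n)) := Finset.univ with hΩ
  set P : Equiv.Perm (Fin n) → ℕ → Prop := fun σ v =>
    ∃ i, meets v i ∧ ¬ internal v i ∧ ∀ i', meets v i' → σ i ≤ σ i' with hP
  have hNpos : 0 < Ω.card := Finset.card_pos.mpr ⟨1, Finset.mem_univ 1⟩
  -- for each of the four sets, the set of "bad" permutations is small
  have key4 : ∀ S : Finset ℕ, S ⊆ F →
      4 * (Ω.filter fun σ => ¬ (S.card ≤ 2 * (S.filter fun v => P σ v).card)).card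
        < Ω.card := by
    intro S hSF
    set BadS : Finset (Equiv.Perm (Fin n)) :=
      Ω.filter fun σ => ¬ (S.card ≤ 2 * (S.filter fun v => P σ v).card) with hBadS
    -- double counting
    have hswap : ∑ σ ∈ Ω, (S.filter fun v => ¬ P σ v).card
        = ∑ v ∈ S, (Ω.filter fun σ => ¬ P σ v).card := by
      simp only [Finset.card_filter]
      rw [Finset.sum_comm]
    -- each bad permutation has many unhappy vertices
    have h1 : ∀ σ ∈ BadS, S.card + 1 ≤ 2 * (S.filter fun v => ¬ P σ v).card := by
      intro σ hσ
      rw [hBadS, Finset.mem_filter] at hσ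
      have hh := hσ.2
      have hsplit : (S.filter fun v => P σ v).card
          + (S.filter fun v => ¬ P σ v).card = S.card :=
        Finset.card_filter_add_card_filter_not _
      omega
    have h2 : BadS.card * (S.card + 1) ≤ ∑ σ ∈ BadS, 2 * (S.filter fun v => ¬ P σ v).card := by
      have := Finset.card_nsmul_le_sum BadS
        (fun σ => 2 * (S.filter fun v => ¬ P σ v).card) (S.card + 1) h1
      simpa [mul_comm] using this
    have h3 : ∑ σ ∈ BadS, 2 * (S.filter fun v => ¬ P σ v).card
        ≤ 2 * ∑ σ ∈ Ω, (S.filter fun v => ¬ P σ v).card := by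
      rw [Finset.mul_sum]
      exact Finset.sum_le_sum_of_subset (Finset.filter_subset _ _)
    have h4 : ∀ v ∈ S, 8 * (Ω.filter fun σ => ¬ P σ v).card ≤ Ω.card - 1 := by
      intro v hv
      have hbc := bad_count hmi (hmeet v (hSF hv)) (hfrac v (hSF hv))
      simp only [hP, hΩ]
      omega
    have h5 : 8 * ∑ v ∈ S, (Ω.filter fun σ => ¬ P σ v).card ≤ S.card * (Ω.card - 1) := by
      rw [Finset.mul_sum]
      exact Finset.sum_le_card_nsmul S _ _ fun v hv => h4 v hv
    have hmain : 4 * (BadS.card * (S.card + 1)) ≤ S.card * (Ω.card - 1) := by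
      calc 4 * (BadS.card * (S.card + 1))
          ≤ 4 * ∑ σ ∈ BadS, 2 * (S.filter fun v => ¬ P σ v).card :=
            Nat.mul_le_mul_left 4 h2
        _ ≤ 4 * (2 * ∑ σ ∈ Ω, (S.filter fun v => ¬ P σ v).card) :=
            Nat.mul_le_mul_left 4 h3
        _ = 8 * ∑ σ ∈ Ω, (S.filter fun v => ¬ P σ v).card := by ring
        _ = 8 * ∑ v ∈ S, (Ω.filter fun σ => ¬ P σ v).card := by rw [hswap]
        _ ≤ S.card * (Ω.card - 1) := h5
    by_contra hcon
    push_neg at hcon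
    have h6 : Ω.card * (S.card + 1) ≤ 4 * BadS.card * (S.card + 1) :=
      Nat.mul_le_mul_right _ hcon
    have h7 : S.card * (Ω.card - 1) ≤ S.card * Ω.card :=
      Nat.mul_le_mul_left _ (Nat.sub_le _ _)
    nlinarith [hmain, h6, h7, hNpos]
  -- combine the four bad sets
  have k1 := key4 (A1 ∩ F) Finset.inter_subset_right
  have k2 := key4 (AK ∩ F) Finset.inter_subset_right
  have k3 := key4 (B1 ∩ F) Finset.inter_subset_right
  have k4 := key4 (BK ∩ F) Finset.inter_subset_right
  set U : Finset (Equiv.Perm (Fin n)) :=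
    (Ω.filter fun σ => ¬ ((A1 ∩ F).card ≤ 2 * ((A1 ∩ F).filter fun v => P σ v).card))
    ∪ (Ω.filter fun σ => ¬ ((AK ∩ F).card ≤ 2 * ((AK ∩ F).filter fun v => P σ v).card))
    ∪ (Ω.filter fun σ => ¬ ((B1 ∩ F).card ≤ 2 * ((B1 ∩ F).filter fun v => P σ v).card))
    ∪ (Ω.filter fun σ => ¬ ((BK ∩ F).card ≤ 2 * ((BK ∩ F).filter fun v => P σ v).card))
    with hU
  have hUcard : U.card < Ω.card := by
    have hle : U.card ≤
        (Ω.filter fun σ => ¬ ((A1 ∩ F).card ≤ 2 * ((A1 ∩ F).filter fun v => P σ v).card)).card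
        + (Ω.filter fun σ => ¬ ((AK ∩ F).card ≤ 2 * ((AK ∩ F).filter fun v => P σ v).card)).card
        + (Ω.filter fun σ => ¬ ((B1 ∩ F).card ≤ 2 * ((B1 ∩ F).filter fun v => P σ v).card)).card
        + (Ω.filter fun σ => ¬ ((BK ∩ F).card ≤ 2 * ((BK ∩ F).filter fun v => P σ v).card)).card := by
      rw [hU]
      refine (Finset.card_union_le _ _).trans ?_
      gcongr
      refine (Finset.card_union_le _ _).trans ?_
      gcongr
      exact Finset.card_union_le _ _
    omega
  have hexσ : ∃ σ : Equiv.Perm (Fin n), σ ∉ U := by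
    by_contra h
    push_neg at h
    have : Ω ⊆ U := fun σ _ => h σ
    exact absurd (Finset.card_le_card this) (by omega)
  obtain ⟨σ, hσ⟩ := hexσ
  refine ⟨σ, ?_⟩
  intro S hS
  rw [hU] at hσ
  simp only [Finset.mem_union, Finset.mem_filter, not_or, not_and, not_not] at hσ
  simp only [List.mem_cons, List.not_mem_nil, or_false] at hS
  rcases hS with rfl | rfl | rfl | rfl
  · exact hσ.1.1.1 (Finset.mem_univ σ)
  · exact hσ.1.1.2 (Finset.mem_univ σ)
  · exact hσ.1.2 (Finset.mem_univ σ)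
  · exact hσ.2 (Finset.mem_univ σ)
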